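/- arXiv:2207.04259 — 2 statements merged into one kernel-verified Lean document; each statement's English description precedes it below -/
import Mathlib

section
/- Let n ≥ 3 be an integer, let A be a symmetric real n×n matrix, and let v ∈ ℝⁿ. Set R = tr(A), w = -2Av, and define the 3-tensor D by D_{ijk} = (1/(n-2))·(A_{ik}v_j - A_{jk}v_i) + (1/(2(n-1)(n-2)))·(δ_{jk}(w_i + 2R v_i) - δ_{ik}(w_j + 2R v_j)). Then Σ_{i,j,k} (D_{ijk})² = (2/(n-2)²)·(‖A‖_F²·‖v‖² - ‖Av‖²) - (2/((n-1)(n-2)²))·‖tr(A)·v - Av‖². -/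
open Finset

set_option maxHeartbeats 2000000

/-- For `n ≥ 3`, a symmetric real `n × n` matrix `A` and a vector `v ∈ ℝⁿ`, setting
`R = tr A`, `w = -2Av`, and
`D i j k = (1/(n-2))·(A i k·v j - A j k·v i)
  + (1/(2(n-1)(n-2)))·(δ j k·(w i + 2R·v i) - δ i k·(w j + 2R·v j))`,
one has
`∑ i j k, (D i j k)² = (2/(n-2)²)·(‖A‖_F²·‖v‖² - ‖Av‖²)
  - (2/((n-1)(n-2)²))·‖tr(A)·v - Av‖²`. -/
theorem D_tensor_norm_sq (n : ℕ) (hn : 3 ≤ n) (A : Matrix (Fin n) (Fin n) ℝ)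
    (hA : A.IsSymm) (v : Fin n → ℝ) :
    let R : ℝ := A.trace
    let w : Fin n → ℝ := fun i => -2 * A.mulVec v i
    let D : Fin n → Fin n → Fin n → ℝ := fun i j k =>
      (1 / ((n : ℝ) - 2)) * (A i k * v j - A j k * v i)
        + (1 / (2 * ((n : ℝ) - 1) * ((n : ℝ) - 2))) *
          ((if j = k then (1 : ℝ) else 0) * (w i + 2 * R * v i)
            - (if i = k then (1 : ℝ) else 0) * (w j + 2 * R * v j))
    ∑ i, ∑ j, ∑ k, (D i j k) ^ 2
      = (2 / ((n : ℝ) - 2) ^ 2) *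
          ((∑ i, ∑ j, (A i j) ^ 2) * (∑ i, (v i) ^ 2) - ∑ i, (A.mulVec v i) ^ 2)
        - (2 / (((n : ℝ) - 1) * ((n : ℝ) - 2) ^ 2)) *
            ∑ i, (A.trace * v i - A.mulVec v i) ^ 2 := by
  intro R w D
  have hsym : ∀ i j : Fin n, A j i = A i j := fun i j => hA.apply i j
  have hNn : (3:ℝ) ≤ (n:ℝ) := by exact_mod_cast hn
  have h2 : ((n:ℝ) - 2) ≠ 0 := ne_of_gt (by linarith)
  have h1 : ((n:ℝ) - 1) ≠ 0 := ne_of_gt (by linarith)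
  have hP : ∀ i, A.mulVec v i = ∑ j, A i j * v j := fun i => by
    simp [Matrix.mulVec, dotProduct]
  have hw : ∀ i, w i = -2 * A.mulVec v i := fun i => rfl
  have hR : R = A.trace := rfl
  have htr : A.trace = ∑ i, A i i := by simp [Matrix.trace, Matrix.diag]
  have hU : ∀ i, w i + 2 * R * v i = 2 * A.trace * v i - 2 * A.mulVec v i := fun i => by
    rw [hw, hR]; ring
  have hdelta : ∀ (j : Fin n) (f : Fin n → ℝ),
      ∑ k, (if j = k then (1:ℝ) else 0) * f k = f j := fun j f => by simp
  have comm3 : ∀ (f : Fin n → Fin n → Fin n → ℝ),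
      (∑ i, ∑ j, ∑ k, f i j k) = ∑ k, ∑ i, ∑ j, f i j k := by
    intro f
    have h1 : ∀ i : Fin n, ∑ j, ∑ k, f i j k = ∑ k, ∑ j, f i j k :=
      fun i => Finset.sum_comm
    simp_rw [h1]
    exact Finset.sum_comm
  -- e1
  have e1 : ∑ i, ∑ j, ∑ k, (A i k)^2 * (v j)^2
      = (∑ i, ∑ j, (A i j)^2) * (∑ i, (v i)^2) := by
    have h : ∀ i : Fin n, ∑ j, ∑ k, (A i k)^2 * (v j)^2
        = (∑ k, (A i k)^2) * (∑ j, (v j)^2) := fun i => by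
      rw [Finset.sum_comm, Finset.sum_mul_sum]
    simp_rw [h, ← Finset.sum_mul]
  -- e2
  have e2 : ∑ i, ∑ j, ∑ k, (A j k)^2 * (v i)^2
      = (∑ i, ∑ j, (A i j)^2) * (∑ i, (v i)^2) := by
    have h : ∀ i : Fin n, ∑ j, ∑ k, (A j k)^2 * (v i)^2
        = (∑ j, ∑ k, (A j k)^2) * (v i)^2 := fun i => by
      simp_rw [← Finset.sum_mul]
    simp_rw [h, ← Finset.mul_sum]
  -- e3
  have e3 : ∑ i, ∑ j, ∑ k, A i k * A j k * (v i * v j)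
      = ∑ i, (A.mulVec v i)^2 := by
    rw [comm3]
    refine Finset.sum_congr rfl fun k _ => ?_
    have h : ∑ i, ∑ j, A i k * A j k * (v i * v j)
        = (∑ i, A i k * v i) * (∑ j, A j k * v j) := by
      rw [Finset.sum_mul_sum]
      exact Finset.sum_congr rfl fun i _ => Finset.sum_congr rfl fun j _ => by ring
    rw [h, hP k]
    have h2 : ∀ i : Fin n, A i k = A k i := fun i => hsym k i
    simp_rw [h2, ← sq]
  -- single-sum expansions
  have hq4 : ∑ i, A.mulVec v i * (w i + 2 * R * v i)
      = 2*A.trace*(∑ i, v i * A.mulVec v i) - 2*(∑ i, (A.mulVec v i)^2) := by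
    have h : ∀ i : Fin n, A.mulVec v i * (w i + 2 * R * v i)
        = 2*A.trace*(v i * A.mulVec v i) - 2*(A.mulVec v i)^2 := fun i => by
      rw [hU]; ring
    simp_rw [h, Finset.sum_sub_distrib, ← Finset.mul_sum]
  have hqv : ∑ i, v i * (w i + 2 * R * v i)
      = 2*A.trace*(∑ i, (v i)^2) - 2*(∑ i, v i * A.mulVec v i) := by
    have h : ∀ i : Fin n, v i * (w i + 2 * R * v i)
        = 2*A.trace*(v i)^2 - 2*(v i * A.mulVec v i) := fun i => by
      rw [hU]; ring
    simp_rw [h, Finset.sum_sub_distrib, ← Finset.mul_sum]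
  have hSu : ∑ i, (w i + 2 * R * v i)^2
      = 4*A.trace^2*(∑ i, (v i)^2) - 8*A.trace*(∑ i, v i * A.mulVec v i)
        + 4*(∑ i, (A.mulVec v i)^2) := by
    have h : ∀ i : Fin n, (w i + 2 * R * v i)^2
        = 4*A.trace^2*(v i)^2 - 8*A.trace*(v i * A.mulVec v i) + 4*(A.mulVec v i)^2 :=
      fun i => by rw [hU]; ring
    simp_rw [h, Finset.sum_add_distrib, Finset.sum_sub_distrib, ← Finset.mul_sum]
  -- e4
  have e4 : ∑ i, ∑ j, ∑ k, (if j = k then (1:ℝ) else 0) * (A i k * v j * (w i + 2*R*v i))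
      = 2*A.trace*(∑ i, v i * A.mulVec v i) - 2*(∑ i, (A.mulVec v i)^2) := by
    simp_rw [hdelta]
    have h : ∀ i : Fin n, ∑ j, A i j * v j * (w i + 2*R*v i)
        = A.mulVec v i * (w i + 2*R*v i) := fun i => by
      rw [hP i, Finset.sum_mul]
    simp_rw [h]
    exact hq4
  -- e5
  have e5 : ∑ i, ∑ j, ∑ k, (if i = k then (1:ℝ) else 0) * (A i k * v j * (w j + 2*R*v j))
      = A.trace * (2*A.trace*(∑ i, (v i)^2) - 2*(∑ i, v i * A.mulVec v i)) := by
    simp_rw [hdelta]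
    have h : ∀ i : Fin n, ∑ j, A i i * v j * (w j + 2*R*v j)
        = A i i * ∑ j, v j * (w j + 2*R*v j) := fun i => by
      rw [Finset.mul_sum]
      exact Finset.sum_congr rfl fun j _ => by ring
    simp_rw [h, ← Finset.sum_mul, ← htr, hqv]
  -- e6
  have e6 : ∑ i, ∑ j, ∑ k, (if j = k then (1:ℝ) else 0) * (A j k * v i * (w i + 2*R*v i))
      = A.trace * (2*A.trace*(∑ i, (v i)^2) - 2*(∑ i, v i * A.mulVec v i)) := by
    simp_rw [hdelta]
    have h : ∀ i : Fin n, ∑ j, A j j * v i * (w i + 2*R*v i)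
        = (∑ j, A j j) * (v i * (w i + 2*R*v i)) := fun i => by
      rw [Finset.sum_mul]
      exact Finset.sum_congr rfl fun j _ => by ring
    simp_rw [h, ← htr, ← Finset.mul_sum, hqv]
  -- e7
  have e7 : ∑ i, ∑ j, ∑ k, (if i = k then (1:ℝ) else 0) * (A j k * v i * (w j + 2*R*v j))
      = 2*A.trace*(∑ i, v i * A.mulVec v i) - 2*(∑ i, (A.mulVec v i)^2) := by
    simp_rw [hdelta]
    rw [Finset.sum_comm]
    have h : ∀ j : Fin n, ∑ i, A j i * v i * (w j + 2*R*v j)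
        = A.mulVec v j * (w j + 2*R*v j) := fun j => by
      rw [hP j, Finset.sum_mul]
    simp_rw [h]
    exact hq4
  -- e8
  have e8 : ∑ i : Fin n, ∑ j : Fin n, ∑ k : Fin n, (if j = k then (1:ℝ) else 0) * ((w i + 2*R*v i))^2
      = (n:ℝ) * (4*A.trace^2*(∑ i, (v i)^2) - 8*A.trace*(∑ i, v i * A.mulVec v i)
        + 4*(∑ i, (A.mulVec v i)^2)) := by
    simp_rw [hdelta, Finset.sum_const, Finset.card_univ, Fintype.card_fin, nsmul_eq_mul,
      ← Finset.mul_sum, hSu]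
  -- e9
  have e9 : ∑ i : Fin n, ∑ j : Fin n, ∑ k : Fin n, (if i = k then (1:ℝ) else 0) * ((w j + 2*R*v j))^2
      = (n:ℝ) * (4*A.trace^2*(∑ i, (v i)^2) - 8*A.trace*(∑ i, v i * A.mulVec v i)
        + 4*(∑ i, (A.mulVec v i)^2)) := by
    simp_rw [hdelta, hSu, Finset.sum_const, Finset.card_univ, Fintype.card_fin, nsmul_eq_mul]
  -- e10
  have e10 : ∑ i : Fin n, ∑ j : Fin n, ∑ k : Fin n, (if j = k then (1:ℝ) else 0) *
        ((if i = k then (1:ℝ) else 0) * ((w i + 2*R*v i) * (w j + 2*R*v j)))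
      = 4*A.trace^2*(∑ i, (v i)^2) - 8*A.trace*(∑ i, v i * A.mulVec v i)
        + 4*(∑ i, (A.mulVec v i)^2) := by
    simp_rw [hdelta, ← sq, hSu]
  -- pointwise expansion of the square
  have hexp : ∀ i j k, (D i j k) ^ 2 =
      (1/((n:ℝ)-2))^2 * ((A i k)^2 * (v j)^2)
    + (1/((n:ℝ)-2))^2 * ((A j k)^2 * (v i)^2)
    - (2*(1/((n:ℝ)-2))^2) * (A i k * A j k * (v i * v j))
    + (2*(1/((n:ℝ)-2))*(1/(2*((n:ℝ)-1)*((n:ℝ)-2)))) *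
        ((if j = k then (1:ℝ) else 0) * (A i k * v j * (w i + 2*R*v i)))
    - (2*(1/((n:ℝ)-2))*(1/(2*((n:ℝ)-1)*((n:ℝ)-2)))) *
        ((if i = k then (1:ℝ) else 0) * (A i k * v j * (w j + 2*R*v j)))
    - (2*(1/((n:ℝ)-2))*(1/(2*((n:ℝ)-1)*((n:ℝ)-2)))) *
        ((if j = k then (1:ℝ) else 0) * (A j k * v i * (w i + 2*R*v i)))
    + (2*(1/((n:ℝ)-2))*(1/(2*((n:ℝ)-1)*((n:ℝ)-2)))) *
        ((if i = k then (1:ℝ) else 0) * (A j k * v i * (w j + 2*R*v j)))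
    + (1/(2*((n:ℝ)-1)*((n:ℝ)-2)))^2 *
        ((if j = k then (1:ℝ) else 0) * ((w i + 2*R*v i))^2)
    + (1/(2*((n:ℝ)-1)*((n:ℝ)-2)))^2 *
        ((if i = k then (1:ℝ) else 0) * ((w j + 2*R*v j))^2)
    - (2*(1/(2*((n:ℝ)-1)*((n:ℝ)-2)))^2) *
        ((if j = k then (1:ℝ) else 0) *
          ((if i = k then (1:ℝ) else 0) * ((w i + 2*R*v i) * (w j + 2*R*v j)))) := by
    intro i j k
    simp only [D]
    split_ifs <;> ring
  have hs : ∑ i, (A.trace * v i - A.mulVec v i) ^ 2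
      = A.trace^2*(∑ i, (v i)^2) - 2*A.trace*(∑ i, v i * A.mulVec v i)
        + ∑ i, (A.mulVec v i)^2 := by
    have h : ∀ i : Fin n, (A.trace * v i - A.mulVec v i)^2
        = A.trace^2*(v i)^2 - 2*A.trace*(v i * A.mulVec v i) + (A.mulVec v i)^2 :=
      fun i => by ring
    simp_rw [h, Finset.sum_add_distrib, Finset.sum_sub_distrib, ← Finset.mul_sum]
  calc ∑ i, ∑ j, ∑ k, (D i j k) ^ 2
      = ∑ i, ∑ j, ∑ k, ((1/((n:ℝ)-2))^2 * ((A i k)^2 * (v j)^2)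
    + (1/((n:ℝ)-2))^2 * ((A j k)^2 * (v i)^2)
    - (2*(1/((n:ℝ)-2))^2) * (A i k * A j k * (v i * v j))
    + (2*(1/((n:ℝ)-2))*(1/(2*((n:ℝ)-1)*((n:ℝ)-2)))) *
        ((if j = k then (1:ℝ) else 0) * (A i k * v j * (w i + 2*R*v i)))
    - (2*(1/((n:ℝ)-2))*(1/(2*((n:ℝ)-1)*((n:ℝ)-2)))) *
        ((if i = k then (1:ℝ) else 0) * (A i k * v j * (w j + 2*R*v j)))
    - (2*(1/((n:ℝ)-2))*(1/(2*((n:ℝ)-1)*((n:ℝ)-2)))) *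
        ((if j = k then (1:ℝ) else 0) * (A j k * v i * (w i + 2*R*v i)))
    + (2*(1/((n:ℝ)-2))*(1/(2*((n:ℝ)-1)*((n:ℝ)-2)))) *
        ((if i = k then (1:ℝ) else 0) * (A j k * v i * (w j + 2*R*v j)))
    + (1/(2*((n:ℝ)-1)*((n:ℝ)-2)))^2 *
        ((if j = k then (1:ℝ) else 0) * ((w i + 2*R*v i))^2)
    + (1/(2*((n:ℝ)-1)*((n:ℝ)-2)))^2 *
        ((if i = k then (1:ℝ) else 0) * ((w j + 2*R*v j))^2)
    - (2*(1/(2*((n:ℝ)-1)*((n:ℝ)-2)))^2) *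
        ((if j = k then (1:ℝ) else 0) *
          ((if i = k then (1:ℝ) else 0) * ((w i + 2*R*v i) * (w j + 2*R*v j))))) :=
        Finset.sum_congr rfl fun i _ => Finset.sum_congr rfl fun j _ =>
          Finset.sum_congr rfl fun k _ => hexp i j k
    _ = (2 / ((n : ℝ) - 2) ^ 2) *
          ((∑ i, ∑ j, (A i j) ^ 2) * (∑ i, (v i) ^ 2) - ∑ i, (A.mulVec v i) ^ 2)
        - (2 / (((n : ℝ) - 1) * ((n : ℝ) - 2) ^ 2)) *
            ∑ i, (A.trace * v i - A.mulVec v i) ^ 2 := by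
      simp only [Finset.sum_add_distrib, Finset.sum_sub_distrib, ← Finset.mul_sum]
      rw [e1, e2, e3, e4, e5, e6, e7, e8, e9, e10, hs]
      field_simp
      ring
end

section
/- Let n ≥ 3 be an integer, let A be a symmetric real n×n matrix, and let v ∈ ℝⁿ. Then ‖A‖_F²·‖v‖² - ‖Av‖² ≥ (1/(n-1))·‖tr(A)·v - Av‖². -/
open Finset

set_option maxHeartbeats 1000000 in
/-- For `n ≥ 3`, a symmetric real `n × n` matrix `A` and a vector `v ∈ ℝⁿ`,
`‖A‖_F²·‖v‖² - ‖Av‖² ≥ (1/(n-1))·‖tr(A)·v - Av‖²`. -/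
theorem frobenius_mulVec_trace_ineq (n : ℕ) (hn : 3 ≤ n) (A : Matrix (Fin n) (Fin n) ℝ)
    (hA : A.IsSymm) (v : Fin n → ℝ) :
    (1 / ((n : ℝ) - 1)) * ∑ i, (A.trace * v i - A.mulVec v i) ^ 2
      ≤ (∑ i, ∑ j, (A i j) ^ 2) * (∑ i, (v i) ^ 2) - ∑ i, (A.mulVec v i) ^ 2 := by
  have hsym : ∀ i j, A j i = A i j := fun i j => hA.apply i j
  set w : Fin n → ℝ := A.mulVec v with hwset
  have hwdef : ∀ i, w i = ∑ j, A i j * v j := by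
    intro i; simp [hwset, Matrix.mulVec, dotProduct]
  set t := A.trace with htset
  have ht : t = ∑ i, A i i := by simp [htset, Matrix.trace, Matrix.diag]
  set s := ∑ i, (v i) ^ 2 with hsdef
  set W := ∑ i, (w i) ^ 2 with hWdef
  set D := ∑ i, ∑ j, (A i j) ^ 2 with hDdef
  set a := ∑ i, v i * w i with hadef
  -- basic single-sum identities
  have hsum_vv : ∑ i, v i * v i = s := by
    rw [hsdef]; exact sum_congr rfl fun i _ => (sq (v i)).symm
  have hsum_ww : ∑ i, w i * w i = W := by
    rw [hWdef]; exact sum_congr rfl fun i _ => (sq (w i)).symm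
  have hsum_wv : ∑ i, w i * v i = a := by
    rw [hadef]; exact sum_congr rfl fun i _ => mul_comm _ _
  have prod_sum : ∀ f g : Fin n → ℝ,
      ∑ i, ∑ j, f i * g j = (∑ i, f i) * (∑ j, g j) := fun f g =>
    (Finset.sum_mul_sum _ _ _ _).symm
  have hcol : ∀ j, ∑ i, A i j * v i = w j := by
    intro j
    rw [hwdef]
    exact sum_congr rfl fun i _ => by rw [hsym j i]
  -- the ten double-sum identities
  have E1 : ∑ i, ∑ j, A i j * A i j = D := by
    rw [hDdef]
    exact sum_congr rfl fun i _ => sum_congr rfl fun j _ => (sq (A i j)).symm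
  have E2 : ∑ i, ∑ j, A i j * (w i * v j) = W := by
    rw [← hsum_ww]
    refine sum_congr rfl fun i _ => ?_
    rw [show ∑ j, A i j * (w i * v j) = w i * ∑ j, A i j * v j by
      rw [mul_sum]; exact sum_congr rfl fun j _ => by ring, ← hwdef]
  have E3 : ∑ i, ∑ j, A i j * (v i * w j) = W := by
    rw [Finset.sum_comm, ← hsum_ww]
    refine sum_congr rfl fun j _ => ?_
    rw [show ∑ i, A i j * (v i * w j) = w j * ∑ i, A i j * v i by
      rw [mul_sum]; exact sum_congr rfl fun i _ => by ring, hcol j]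
  have E4 : ∑ i, ∑ j, A i j * (v i * v j) = a := by
    rw [hadef]
    refine sum_congr rfl fun i _ => ?_
    rw [show ∑ j, A i j * (v i * v j) = v i * ∑ j, A i j * v j by
      rw [mul_sum]; exact sum_congr rfl fun j _ => by ring, ← hwdef]
  have E5 : ∑ i, ∑ j, (w i * v j) * (w i * v j) = W * s := by
    rw [← hsum_ww, ← hsum_vv,
      show (∑ i, w i * w i) * ∑ j, v j * v j
        = ∑ i, ∑ j, (w i * w i) * (v j * v j) from (prod_sum _ _).symm]
    exact sum_congr rfl fun i _ => sum_congr rfl fun j _ => by ring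
  have E6 : ∑ i, ∑ j, (v i * w j) * (v i * w j) = s * W := by
    rw [← hsum_ww, ← hsum_vv,
      show (∑ i, v i * v i) * ∑ j, w j * w j
        = ∑ i, ∑ j, (v i * v i) * (w j * w j) from (prod_sum _ _).symm]
    exact sum_congr rfl fun i _ => sum_congr rfl fun j _ => by ring
  have E7 : ∑ i, ∑ j, (v i * v j) * (v i * v j) = s * s := by
    rw [← hsum_vv,
      show (∑ i, v i * v i) * ∑ j, v j * v j
        = ∑ i, ∑ j, (v i * v i) * (v j * v j) from (prod_sum _ _).symm]
    exact sum_congr rfl fun i _ => sum_congr rfl fun j _ => by ring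
  have E8 : ∑ i, ∑ j, (w i * v j) * (v i * w j) = a * a := by
    rw [← hsum_wv,
      show (∑ i, w i * v i) * ∑ j, w j * v j
        = ∑ i, ∑ j, (w i * v i) * (w j * v j) from (prod_sum _ _).symm]
    exact sum_congr rfl fun i _ => sum_congr rfl fun j _ => by ring
  have E9 : ∑ i, ∑ j, (w i * v j) * (v i * v j) = a * s := by
    rw [← hsum_wv, ← hsum_vv,
      show (∑ i, w i * v i) * ∑ j, v j * v j
        = ∑ i, ∑ j, (w i * v i) * (v j * v j) from (prod_sum _ _).symm]
    exact sum_congr rfl fun i _ => sum_congr rfl fun j _ => by ring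
  have E10 : ∑ i, ∑ j, (v i * w j) * (v i * v j) = s * a := by
    rw [← hsum_wv, ← hsum_vv,
      show (∑ i, v i * v i) * ∑ j, w j * v j
        = ∑ i, ∑ j, (v i * v i) * (w j * v j) from (prod_sum _ _).symm]
    exact sum_congr rfl fun i _ => sum_congr rfl fun j _ => by ring
  -- the matrices C = (sI - vvᵀ) A (sI - vvᵀ) and g = sI - vvᵀ, in coordinates
  set C : Fin n → Fin n → ℝ := fun i j =>
    s ^ 2 * A i j - s * (w i * v j) - s * (v i * w j) + a * (v i * v j) with hCdef
  set g : Fin n → Fin n → ℝ := fun i j =>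
    (if i = j then s else 0) - v i * v j with hgdef
  have hCC : ∑ i, ∑ j, (C i j) ^ 2 = s ^ 4 * D - 2 * s ^ 3 * W + s ^ 2 * a ^ 2 := by
    calc ∑ i, ∑ j, (C i j) ^ 2
        = ∑ i, ∑ j, (s ^ 4 * (A i j * A i j)
            - 2 * s ^ 3 * (A i j * (w i * v j)) - 2 * s ^ 3 * (A i j * (v i * w j))
            + 2 * (s ^ 2 * a) * (A i j * (v i * v j))
            + s ^ 2 * ((w i * v j) * (w i * v j)) + s ^ 2 * ((v i * w j) * (v i * w j))
            + a ^ 2 * ((v i * v j) * (v i * v j))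
            + 2 * s ^ 2 * ((w i * v j) * (v i * w j))
            - 2 * (s * a) * ((w i * v j) * (v i * v j))
            - 2 * (s * a) * ((v i * w j) * (v i * v j))) := by
          refine sum_congr rfl fun i _ => sum_congr rfl fun j _ => ?_
          simp only [hCdef]; ring
      _ = s ^ 4 * (∑ i, ∑ j, A i j * A i j)
            - 2 * s ^ 3 * (∑ i, ∑ j, A i j * (w i * v j))
            - 2 * s ^ 3 * (∑ i, ∑ j, A i j * (v i * w j))
            + 2 * (s ^ 2 * a) * (∑ i, ∑ j, A i j * (v i * v j))
            + s ^ 2 * (∑ i, ∑ j, (w i * v j) * (w i * v j))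
            + s ^ 2 * (∑ i, ∑ j, (v i * w j) * (v i * w j))
            + a ^ 2 * (∑ i, ∑ j, (v i * v j) * (v i * v j))
            + 2 * s ^ 2 * (∑ i, ∑ j, (w i * v j) * (v i * w j))
            - 2 * (s * a) * (∑ i, ∑ j, (w i * v j) * (v i * v j))
            - 2 * (s * a) * (∑ i, ∑ j, (v i * w j) * (v i * v j)) := by
          simp only [Finset.sum_add_distrib, Finset.sum_sub_distrib, ← Finset.mul_sum]
      _ = s ^ 4 * D - 2 * s ^ 3 * W + s ^ 2 * a ^ 2 := by
          rw [E1, E2, E3, E4, E5, E6, E7, E8, E9, E10]; ring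
  have hgg : ∑ i, ∑ j, (g i j) ^ 2 = ((n : ℝ) - 1) * s ^ 2 := by
    have inner : ∀ i, ∑ j, (g i j) ^ 2 = s ^ 2 - s * (v i * v i) := by
      intro i
      calc ∑ j, (g i j) ^ 2
          = ∑ j, ((if i = j then s ^ 2 - 2 * s * (v i * v j) else 0)
              + (v i * v i) * (v j * v j)) := by
            refine sum_congr rfl fun j _ => ?_
            by_cases h : i = j
            · simp only [hgdef, h, if_pos rfl, if_pos]; ring
            · simp only [hgdef, if_neg h]; ring
        _ = (s ^ 2 - 2 * s * (v i * v i)) + (v i * v i) * ∑ j, v j * v j := by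
            rw [Finset.sum_add_distrib, Finset.sum_ite_eq, if_pos (mem_univ i),
              ← Finset.mul_sum]
        _ = s ^ 2 - s * (v i * v i) := by rw [hsum_vv]; ring
    calc ∑ i, ∑ j, (g i j) ^ 2 = ∑ i, (s ^ 2 - s * (v i * v i)) :=
          sum_congr rfl fun i _ => inner i
      _ = (n : ℝ) * s ^ 2 - s * ∑ i, v i * v i := by
          rw [Finset.sum_sub_distrib, Finset.sum_const, ← Finset.mul_sum]
          simp [Finset.card_univ]
      _ = ((n : ℝ) - 1) * s ^ 2 := by rw [hsum_vv]; ring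
  have hCg : ∑ i, ∑ j, C i j * g i j = s ^ 2 * (s * t - a) := by
    have hdiag : ∑ i, s * C i i = s * (s ^ 2 * t - s * a) := by
      calc ∑ i, s * C i i
          = ∑ i, (s ^ 3 * A i i - 2 * s ^ 2 * (v i * w i) + (s * a) * (v i * v i)) := by
            refine sum_congr rfl fun i _ => ?_
            simp only [hCdef]; ring
        _ = s ^ 3 * (∑ i, A i i) - 2 * s ^ 2 * (∑ i, v i * w i)
              + (s * a) * ∑ i, v i * v i := by
            simp only [Finset.sum_add_distrib, Finset.sum_sub_distrib, ← Finset.mul_sum]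
        _ = s * (s ^ 2 * t - s * a) := by rw [← ht, ← hadef, hsum_vv]; ring
    have hCvv : ∑ i, ∑ j, C i j * (v i * v j) = 0 := by
      calc ∑ i, ∑ j, C i j * (v i * v j)
          = ∑ i, ∑ j, (s ^ 2 * (A i j * (v i * v j))
              - s * ((w i * v j) * (v i * v j)) - s * ((v i * w j) * (v i * v j))
              + a * ((v i * v j) * (v i * v j))) := by
            refine sum_congr rfl fun i _ => sum_congr rfl fun j _ => ?_
            simp only [hCdef]; ring
        _ = s ^ 2 * (∑ i, ∑ j, A i j * (v i * v j))
              - s * (∑ i, ∑ j, (w i * v j) * (v i * v j))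
              - s * (∑ i, ∑ j, (v i * w j) * (v i * v j))
              + a * (∑ i, ∑ j, (v i * v j) * (v i * v j)) := by
            simp only [Finset.sum_add_distrib, Finset.sum_sub_distrib, ← Finset.mul_sum]
        _ = 0 := by rw [E4, E9, E10, E7]; ring
    calc ∑ i, ∑ j, C i j * g i j
        = ∑ i, ∑ j, ((if i = j then s * C i j else 0) - C i j * (v i * v j)) := by
          refine sum_congr rfl fun i _ => sum_congr rfl fun j _ => ?_
          by_cases h : i = j
          · simp only [hgdef, h, if_true, eq_self_iff_true]; ring
          · simp only [hgdef, if_neg h]; ring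
      _ = (∑ i, s * C i i) - ∑ i, ∑ j, C i j * (v i * v j) := by
          rw [← Finset.sum_sub_distrib]
          refine sum_congr rfl fun i _ => ?_
          rw [Finset.sum_sub_distrib, Finset.sum_ite_eq, if_pos (mem_univ i)]
      _ = s ^ 2 * (s * t - a) := by rw [hdiag, hCvv]; ring
  -- Cauchy–Schwarz applied to C and g (over the product index set)
  have CS2 : (∑ i, ∑ j, C i j * g i j) ^ 2
      ≤ (∑ i, ∑ j, (C i j) ^ 2) * (∑ i, ∑ j, (g i j) ^ 2) := by
    have h := Finset.sum_mul_sq_le_sq_mul_sq Finset.univ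
      (fun p : Fin n × Fin n => C p.1 p.2) (fun p : Fin n × Fin n => g p.1 p.2)
    simpa [Fintype.sum_prod_type] using h
  -- ordinary Cauchy–Schwarz
  have CS1 : a ^ 2 ≤ s * W := by
    have h := Finset.sum_mul_sq_le_sq_mul_sq Finset.univ v w
    rw [← hadef, ← hsdef, ← hWdef] at h
    exact h
  -- the sum in the goal
  have hq : ∑ i, (t * v i - w i) ^ 2 = t ^ 2 * s - 2 * t * a + W := by
    calc ∑ i, (t * v i - w i) ^ 2
        = ∑ i, (t ^ 2 * (v i) ^ 2 - 2 * t * (v i * w i) + (w i) ^ 2) := by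
          refine sum_congr rfl fun i _ => ?_; ring
      _ = t ^ 2 * (∑ i, (v i) ^ 2) - 2 * t * (∑ i, v i * w i) + ∑ i, (w i) ^ 2 := by
          simp only [Finset.sum_add_distrib, Finset.sum_sub_distrib, ← Finset.mul_sum]
      _ = t ^ 2 * s - 2 * t * a + W := by rw [← hsdef, ← hadef, ← hWdef]
  have hn1 : (2 : ℝ) ≤ (n : ℝ) - 1 := by
    have : (3 : ℝ) ≤ (n : ℝ) := by exact_mod_cast hn
    linarith
  have hn1pos : (0 : ℝ) < (n : ℝ) - 1 := by linarith
  rw [hq]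
  rw [one_div, inv_mul_le_iff₀ hn1pos]
  -- remaining goal: t ^ 2 * s - 2 * t * a + W ≤ ((n:ℝ) - 1) * (D * s - W)
  have hs0 : 0 ≤ s := by
    rw [hsdef]; exact sum_nonneg fun i _ => sq_nonneg _
  rcases hs0.lt_or_eq with hspos | hzero
  · -- s > 0
    have key : (s * t - a) ^ 2 ≤ ((n : ℝ) - 1) * (s ^ 2 * D - 2 * s * W + a ^ 2) := by
      have h4 : (0 : ℝ) < s ^ 4 := by positivity
      refine le_of_mul_le_mul_left ?_ h4
      calc s ^ 4 * (s * t - a) ^ 2 = (s ^ 2 * (s * t - a)) ^ 2 := by ring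
        _ ≤ (∑ i, ∑ j, (C i j) ^ 2) * (∑ i, ∑ j, (g i j) ^ 2) := by rw [← hCg]; exact CS2
        _ = s ^ 4 * (((n : ℝ) - 1) * (s ^ 2 * D - 2 * s * W + a ^ 2)) := by
            rw [hCC, hgg]; ring
    have hWs : 0 ≤ s * W - a ^ 2 := by linarith
    have hmul : (t ^ 2 * s - 2 * t * a + W) * s
        ≤ (((n : ℝ) - 1) * (D * s - W)) * s := by
      nlinarith [key, mul_nonneg (show (0 : ℝ) ≤ (n : ℝ) - 2 by linarith) hWs]
    exact le_of_mul_le_mul_right hmul hspos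
  · -- s = 0, hence v = 0 and everything vanishes
    have hv : ∀ i, v i = 0 := by
      intro i
      have hz : ∑ i, (v i) ^ 2 = 0 := by rw [← hsdef, ← hzero]
      have h := (Finset.sum_eq_zero_iff_of_nonneg
        (fun i _ => sq_nonneg (v i))).mp hz i (mem_univ i)
      exact pow_eq_zero_iff two_ne_zero |>.mp h
    have hw0 : ∀ i, w i = 0 := by
      intro i; rw [hwdef]
      exact Finset.sum_eq_zero fun j _ => by rw [hv j, mul_zero]
    have hW0 : W = 0 := by
      rw [hWdef]; exact Finset.sum_eq_zero fun i _ => by rw [hw0 i]; ring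
    have ha0 : a = 0 := by
      rw [hadef]; exact Finset.sum_eq_zero fun i _ => by rw [hv i]; ring
    rw [hW0, ha0, ← hzero]
    nlinarith [hn1pos]
end
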